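/- Let f : [0,1] → [0,∞) be continuous and nondecreasing with f(1) > 1/2. Then f satisfies the integral equation f(r)² = 1/4 + r f(r) − ∫₀ʳ f(u) du + (1/4 + f(1)/2 − ∫₀¹ f(s) ds)·r² for all r ∈ [0,1] if and only if f is continuously differentiable and satisfies f(0) = 1/2 and f'(r) = c r/(f(r) − r/2) on [0,1], where c = 1/4 + f(1)/2 − ∫₀¹ f(s) ds; and in that case c > 0. -/

import Mathlib

open Set intervalIntegral MeasureTheory

/-- Let f : [0,1] → [0,∞) be continuous and nondecreasing with f(1) > 1/2, and set
c = 1/4 + f(1)/2 − ∫₀¹ f(s) ds. Then f satisfies the integral equation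
f(r)² = 1/4 + r f(r) − ∫₀ʳ f(u) du + c·r² on [0,1] if and only if f(0) = 1/2 and f is
(continuously) differentiable with f'(r) = c r/(f(r) − r/2) on [0,1]; and in that case
c > 0. -/
theorem stmt14 (f : ℝ → ℝ)
    (hf : ContinuousOn f (Set.Icc 0 1))
    (hmono : MonotoneOn f (Set.Icc 0 1))
    (hnonneg : ∀ r ∈ Set.Icc (0:ℝ) 1, 0 ≤ f r)
    (hf1 : 1/2 < f 1) :
    ((∀ r ∈ Set.Icc (0:ℝ) 1,
        (f r)^2 = 1/4 + r * f r - (∫ u in (0:ℝ)..r, f u)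
          + (1/4 + f 1 / 2 - ∫ s in (0:ℝ)..1, f s) * r^2)
      ↔ (f 0 = 1/2 ∧ ∀ r ∈ Set.Icc (0:ℝ) 1,
          HasDerivWithinAt f
            ((1/4 + f 1 / 2 - ∫ s in (0:ℝ)..1, f s) * r / (f r - r/2))
            (Set.Icc 0 1) r))
    ∧ ((∀ r ∈ Set.Icc (0:ℝ) 1,
        (f r)^2 = 1/4 + r * f r - (∫ u in (0:ℝ)..r, f u)
          + (1/4 + f 1 / 2 - ∫ s in (0:ℝ)..1, f s) * r^2)
        → 0 < 1/4 + f 1 / 2 - ∫ s in (0:ℝ)..1, f s) := by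
  set c : ℝ := 1/4 + f 1 / 2 - ∫ s in (0:ℝ)..1, f s with hcdef
  clear_value c
  have h01 : (0:ℝ) ∈ Icc (0:ℝ) 1 := left_mem_Icc.mpr zero_le_one
  have h11 : (1:ℝ) ∈ Icc (0:ℝ) 1 := right_mem_Icc.mpr zero_le_one
  -- interval integrability
  have hInt : ∀ r ∈ Icc (0:ℝ) 1, IntervalIntegrable f volume 0 r := by
    intro r hr
    apply ContinuousOn.intervalIntegrable (hf.mono _)
    rw [uIcc_of_le hr.1]
    exact Icc_subset_Icc le_rfl hr.2
  -- fundamental theorem of calculus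
  have hFTC : ∀ r ∈ Icc (0:ℝ) 1,
      HasDerivWithinAt (fun t => ∫ u in (0:ℝ)..t, f u) (f r) (Icc 0 1) r := by
    intro r hr
    haveI : Fact (r ∈ Icc (0:ℝ) 1) := ⟨hr⟩
    exact intervalIntegral.integral_hasDerivWithinAt_right (hInt r hr)
      (hf.stronglyMeasurableAtFilter_nhdsWithin measurableSet_Icc r)
      (hf r hr)
  -- positivity of f r - r/2, given f 0 = 1/2
  have gpos : f 0 = 1/2 → ∀ r ∈ Icc (0:ℝ) 1, 0 < f r - r/2 := by
    intro f0 r hr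
    have hmr : f 0 ≤ f r := hmono h01 hr hr.1
    rcases eq_or_lt_of_le hr.2 with h1 | h1
    · rw [h1]; linarith
    · linarith
  constructor
  · constructor
    · -- forward direction
      intro H
      have f0 : f 0 = 1/2 := by
        have h := H 0 h01
        simp only [intervalIntegral.integral_same] at h
        have h0 := hnonneg 0 h01
        nlinarith
      have hg := gpos f0
      refine ⟨f0, ?_⟩
      set φ : ℝ → ℝ := fun t => 1/4 + (c+1/4)*t^2 - ∫ u in (0:ℝ)..t, f u with hφdef
      have key : ∀ r ∈ Icc (0:ℝ) 1, (f r - r/2)^2 = φ r := by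
        intro r hr
        have h := H r hr
        simp only [hφdef]
        nlinarith [h]
      have φpos : ∀ r ∈ Icc (0:ℝ) 1, 0 < φ r := by
        intro r hr
        rw [← key r hr]
        exact pow_pos (hg r hr) 2
      have hφd : ∀ r ∈ Icc (0:ℝ) 1,
          HasDerivWithinAt φ (2*(c+1/4)*r - f r) (Icc 0 1) r := by
        intro r hr
        have h1 : HasDerivWithinAt (fun t : ℝ => 1/4 + (c+1/4)*t^2) (2*(c+1/4)*r)
            (Icc 0 1) r := by
          have h := (((hasDerivAt_pow 2 r).const_mul (c+1/4)).const_add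
            (1/4 : ℝ)).hasDerivWithinAt (s := Icc (0:ℝ) 1)
          refine h.congr_deriv ?_
          push_cast
          ring
        exact h1.sub (hFTC r hr)
      have hsqrt : ∀ t ∈ Icc (0:ℝ) 1, f t = Real.sqrt (φ t) + t/2 := by
        intro t ht
        rw [← key t ht, Real.sqrt_sq (le_of_lt (hg t ht))]
        ring
      intro r hr
      have hgr := hg r hr
      have hsd : HasDerivWithinAt (fun t => Real.sqrt (φ t) + t/2)
          (1/(2*Real.sqrt (φ r)) * (2*(c+1/4)*r - f r) + 1/2) (Icc 0 1) r := by
        have h := (Real.hasDerivAt_sqrt (ne_of_gt (φpos r hr))).comp_hasDerivWithinAt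
          r (hφd r hr)
        have h2 : HasDerivWithinAt (fun t : ℝ => t/2) (1/2) (Icc 0 1) r := by
          simpa using (hasDerivWithinAt_id r (Icc (0:ℝ) 1)).div_const 2
        exact h.add h2
      have hfd : HasDerivWithinAt f
          (1/(2*Real.sqrt (φ r)) * (2*(c+1/4)*r - f r) + 1/2) (Icc 0 1) r :=
        hsd.congr hsqrt (hsqrt r hr)
      have hsφ : Real.sqrt (φ r) = f r - r/2 := by
        rw [← key r hr, Real.sqrt_sq (le_of_lt hgr)]
      convert hfd using 1
      rw [hsφ]
      have hne : f r - r/2 ≠ 0 := ne_of_gt hgr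
      have hA : (f r - r/2) * (f r - r/2)⁻¹ = 1 := mul_inv_cancel₀ hne
      rw [div_eq_mul_inv, one_div, mul_inv, ← div_eq_mul_inv]
      linear_combination (1/2 : ℝ) * hA
    · -- reverse direction
      rintro ⟨f0, hd⟩
      have hg := gpos f0
      set F : ℝ → ℝ := fun t => (f t)^2 - t * f t + (∫ u in (0:ℝ)..t, f u) - c*t^2
        with hFdef
      have hFd : ∀ r ∈ Icc (0:ℝ) 1, HasDerivWithinAt F 0 (Icc 0 1) r := by
        intro r hr
        have hgr := hg r hr
        have hne : f r - r/2 ≠ 0 := ne_of_gt hgr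
        have h1 := (hd r hr).pow 2
        have h2 := (hasDerivWithinAt_id r (Icc (0:ℝ) 1)).mul (hd r hr)
        have h3 := hFTC r hr
        have h4 : HasDerivWithinAt (fun t : ℝ => c*t^2) (c*(2*r)) (Icc 0 1) r := by
          have h := ((hasDerivAt_pow 2 r).const_mul c).hasDerivWithinAt
            (s := Icc (0:ℝ) 1)
          refine h.congr_deriv ?_
          push_cast
          ring
        have h5 := ((h1.sub h2).add h3).sub h4
        have hdg : c * r / (f r - r/2) * (f r - r/2) = c * r := div_mul_cancel₀ _ hne
        refine h5.congr_deriv ?_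
        simp only [id_eq]
        push_cast
        linear_combination (2 : ℝ) * hdg
      have hconst : ∀ r ∈ Icc (0:ℝ) 1, F r = F 0 := by
        intro r hr
        have h := Convex.norm_image_sub_le_of_norm_hasDerivWithin_le
          (f' := fun _ => (0:ℝ)) (C := 0) hFd (fun x _ => by simp) (convex_Icc 0 1) h01 hr
        simp only [zero_mul, Real.norm_eq_abs] at h
        have : |F r - F 0| = 0 := le_antisymm h (abs_nonneg _)
        have := abs_eq_zero.mp this
        linarith
      have hF0 : F 0 = 1/4 := by
        simp [hFdef, f0]
        norm_num
      intro r hr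
      have h := hconst r hr
      rw [hF0] at h
      simp only [hFdef] at h
      linarith
  · -- positivity
    intro H
    have h := H 1 h11
    simp only [one_pow, one_mul, mul_one] at h
    rw [hcdef] at h ⊢; nlinarith [hf1]
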